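/- Let f be a nonzero Laurent polynomial in ℤ[T,T⁻¹]. If f is unit symmetric, i.e. there exists a unit u of ℤ[T,T⁻¹] with ι(u·f) = u·f, then the degree of f is even: the difference between the maximal and the minimal element of the support of f is an even integer. -/

import Mathlib

open LaurentPolynomial

namespace UnitSymAux

open AddMonoidAlgebra

noncomputable def sMax (f : LaurentPolynomial ℤ) (hf : f ≠ 0) : ℤ :=
  f.coeff.support.max' (Finsupp.support_nonempty_iff.mpr (by simpa using hf))

noncomputable def sMin (f : LaurentPolynomial ℤ) (hf : f ≠ 0) : ℤ :=
  f.coeff.support.min' (Finsupp.support_nonempty_iff.mpr (by simpa using hf))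

lemma sMax_congr {p q : LaurentPolynomial ℤ} (h : p = q) (hp : p ≠ 0) (hq : q ≠ 0) :
    sMax p hp = sMax q hq := by subst h; rfl

lemma sMin_congr {p q : LaurentPolynomial ℤ} (h : p = q) (hp : p ≠ 0) (hq : q ≠ 0) :
    sMin p hp = sMin q hq := by subst h; rfl

lemma min_le_max (f : LaurentPolynomial ℤ) (hf : f ≠ 0) : sMin f hf ≤ sMax f hf :=
  Finset.min'_le _ _ (Finset.max'_mem _ _)

lemma sMax_mul (p q : LaurentPolynomial ℤ) (hp : p ≠ 0) (hq : q ≠ 0)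
    (hpq : p * q ≠ 0) : sMax (p * q) hpq = sMax p hp + sMax q hq := by
  classical
  have hua : UniqueAdd p.coeff.support q.coeff.support (sMax p hp) (sMax q hq) := by
    intro x y hx hy hxy
    have h1 : x ≤ sMax p hp := Finset.le_max' _ _ hx
    have h2 : y ≤ sMax q hq := Finset.le_max' _ _ hy
    omega
  have key : (p * q).coeff (sMax p hp + sMax q hq) = p.coeff (sMax p hp) * q.coeff (sMax q hq) :=
    AddMonoidAlgebra.coeff_mul_add_of_uniqueAdd hua
  apply le_antisymm
  · apply Finset.max'_le
    intro n hn
    have hmem := AddMonoidAlgebra.support_coeff_mul_subset p q hn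
    rw [Finset.mem_add] at hmem
    obtain ⟨x, hx, y, hy, rfl⟩ := hmem
    have h1 : x ≤ sMax p hp := Finset.le_max' _ _ hx
    have h2 : y ≤ sMax q hq := Finset.le_max' _ _ hy
    omega
  · apply Finset.le_max'
    rw [Finsupp.mem_support_iff, key]
    exact mul_ne_zero
      (Finsupp.mem_support_iff.mp (Finset.max'_mem _ _))
      (Finsupp.mem_support_iff.mp (Finset.max'_mem _ _))

lemma invert_ne_zero {f : LaurentPolynomial ℤ} (hf : f ≠ 0) : invert f ≠ 0 := by
  intro h
  apply hf
  have := congrArg (invert (R := ℤ)) h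
  rwa [involutive_invert f, map_zero] at this

lemma mem_support_invert (f : LaurentPolynomial ℤ) (n : ℤ) :
    n ∈ (invert f).coeff.support ↔ -n ∈ f.coeff.support := by
  simp [Finsupp.mem_support_iff]

lemma sMax_invert (f : LaurentPolynomial ℤ) (hf : f ≠ 0) :
    sMax (invert f) (invert_ne_zero hf) = - sMin f hf := by
  apply le_antisymm
  · apply Finset.max'_le
    intro y hy
    rw [mem_support_invert] at hy
    have h1 : sMin f hf ≤ -y := Finset.min'_le _ _ hy
    omega
  · apply Finset.le_max'
    rw [mem_support_invert, neg_neg]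
    exact Finset.min'_mem _ _

lemma sMin_mul (p q : LaurentPolynomial ℤ) (hp : p ≠ 0) (hq : q ≠ 0)
    (hpq : p * q ≠ 0) : sMin (p * q) hpq = sMin p hp + sMin q hq := by
  have h1 := sMax_invert (p * q) hpq
  have h2 := sMax_invert p hp
  have h3 := sMax_invert q hq
  have hmul : invert (p * q) = invert p * invert q := map_mul _ _ _
  have hne : invert p * invert q ≠ 0 := hmul ▸ invert_ne_zero hpq
  have h4 : sMax (invert (p * q)) (invert_ne_zero hpq)
      = sMax (invert p) (invert_ne_zero hp) + sMax (invert q) (invert_ne_zero hq) := by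
    rw [sMax_congr hmul _ hne]
    exact sMax_mul _ _ (invert_ne_zero hp) (invert_ne_zero hq) _
  omega

lemma support_one : (1 : LaurentPolynomial ℤ).coeff.support = {0} := by
  rw [AddMonoidAlgebra.one_def, AddMonoidAlgebra.coeff_single, Finsupp.support_single_ne_zero _ one_ne_zero]

lemma sMax_one : sMax (1 : LaurentPolynomial ℤ) one_ne_zero = 0 := by
  simp [sMax, support_one]

lemma sMin_one : sMin (1 : LaurentPolynomial ℤ) one_ne_zero = 0 := by
  simp [sMin, support_one]

end UnitSymAux

open UnitSymAux

/-- A nonzero unit symmetric Laurent polynomial over `ℤ` has even degree: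
the difference of the maximal and minimal elements of its support is even. -/
theorem unit_symmetric_even_degree (f : LaurentPolynomial ℤ) (hf : f ≠ 0)
    (hsym : ∃ u : (LaurentPolynomial ℤ)ˣ,
      invert ((u : LaurentPolynomial ℤ) * f) = (u : LaurentPolynomial ℤ) * f) :
    Even (f.coeff.support.max' (Finsupp.support_nonempty_iff.mpr (by simpa using hf)) -
      f.coeff.support.min' (Finsupp.support_nonempty_iff.mpr (by simpa using hf))) := by
  obtain ⟨u, hu⟩ := hsym
  set U : LaurentPolynomial ℤ := (u : LaurentPolynomial ℤ) with hU
  set V : LaurentPolynomial ℤ := ((u⁻¹ : (LaurentPolynomial ℤ)ˣ) : LaurentPolynomial ℤ) with hV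
  have hUV : U * V = 1 := by rw [hU, hV, ← Units.val_mul, mul_inv_cancel, Units.val_one]
  have hUVne : U * V ≠ 0 := by rw [hUV]; exact one_ne_zero
  have hUne : U ≠ 0 := by
    intro h; apply (one_ne_zero : (1 : LaurentPolynomial ℤ) ≠ 0); rw [← hUV, h, zero_mul]
  have hVne : V ≠ 0 := by
    intro h; apply (one_ne_zero : (1 : LaurentPolynomial ℤ) ≠ 0); rw [← hUV, h, mul_zero]
  have hgne : U * f ≠ 0 := by
    intro h
    apply hf
    have : V * (U * f) = f := by rw [← mul_assoc, mul_comm V U, hUV, one_mul]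
    rw [h, mul_zero] at this; exact this.symm
  have h1 : sMax (U * V) hUVne = sMax U hUne + sMax V hVne := sMax_mul U V hUne hVne _
  have h2 : sMin (U * V) hUVne = sMin U hUne + sMin V hVne := sMin_mul U V hUne hVne _
  have hmax1 : sMax (U * V) hUVne = 0 := by
    rw [sMax_congr hUV _ one_ne_zero]; exact sMax_one
  have hmin1 : sMin (U * V) hUVne = 0 := by
    rw [sMin_congr hUV _ one_ne_zero]; exact sMin_one
  have hUle := min_le_max U hUne
  have hVle := min_le_max V hVne
  have hUeq : sMax U hUne = sMin U hUne := by omega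
  have hsymg : sMax (U * f) hgne = - sMin (U * f) hgne := by
    have h := sMax_invert (U * f) hgne
    rwa [sMax_congr hu _ hgne] at h
  have hgmax : sMax (U * f) hgne = sMax U hUne + sMax f hf := sMax_mul U f hUne hf hgne
  have hgmin : sMin (U * f) hgne = sMin U hUne + sMin f hf := sMin_mul U f hUne hf hgne
  show Even (sMax f hf - sMin f hf)
  exact ⟨sMax (U * f) hgne, by omega⟩
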